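/- Let α∈(0,1), set σ := 1 − α/2 (so σ∈(1/2,1)), and let m≥1 be an integer. Define c_0^{(m)} := ((1+σ)^{2−α} − σ^{2−α})/(2−α) − ((1+σ)^{1−α} − σ^{1−α})/2; for 1≤i≤m−1, c_i^{(m)} := ((i+σ+1)^{2−α} − 2(i+σ)^{2−α} + (i+σ−1)^{2−α})/(2−α) − ((i+σ+1)^{1−α} − 2(i+σ)^{1−α} + (i+σ−1)^{1−α})/2; and c_m^{(m)} := (3(m+σ)^{1−α} − (m+σ−1)^{1−α})/2 − ((m+σ)^{2−α} − (m+σ−1)^{2−α})/(2−α). Then 0 < (1−α)/(2(m+σ)^{α}) < c_m^{(m)} < c_{m−1}^{(m)} < ⋯ < c_1^{(m)} < c_0^{(m)}. -/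

import Mathlib

/-- The discrete convolution weights `c_i^{(m)}` of the second-order (L2-1σ type)
approximation of the Caputo derivative of order `β` at the intermediate point
with parameter `σ`. -/
noncomputable def cweight (β σ : ℝ) (m i : ℕ) : ℝ :=
  if i = 0 then
    ((1 + σ) ^ (2 - β) - σ ^ (2 - β)) / (2 - β)
      - ((1 + σ) ^ (1 - β) - σ ^ (1 - β)) / 2
  else if i = m then
    (3 * ((m : ℝ) + σ) ^ (1 - β) - ((m : ℝ) + σ - 1) ^ (1 - β)) / 2
      - (((m : ℝ) + σ) ^ (2 - β) - ((m : ℝ) + σ - 1) ^ (2 - β)) / (2 - β)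
  else
    (((i : ℝ) + σ + 1) ^ (2 - β) - 2 * ((i : ℝ) + σ) ^ (2 - β)
        + ((i : ℝ) + σ - 1) ^ (2 - β)) / (2 - β)
      - (((i : ℝ) + σ + 1) ^ (1 - β) - 2 * ((i : ℝ) + σ) ^ (1 - β)
        + ((i : ℝ) + σ - 1) ^ (1 - β)) / 2

namespace CW
open Set

noncomputable def Pf (α x : ℝ) : ℝ := x ^ (2 - α) / (2 - α)
noncomputable def pf (α x : ℝ) : ℝ := x ^ (1 - α)
noncomputable def dpf (α x : ℝ) : ℝ := (1 - α) * x ^ (-α)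
noncomputable def Gf (α x : ℝ) : ℝ := x ^ (2 - α) / (2 - α) - x ^ (1 - α) / 2
noncomputable def phif (α x : ℝ) : ℝ := x ^ (1 - α) - (1 - α) / 2 * x ^ (-α)
noncomputable def psif (α x : ℝ) : ℝ :=
  (1 - α) * x ^ (-α) + α * (1 - α) / 2 * x ^ (-α - 1)

variable {α x y : ℝ}

lemma hd_pow (c : ℝ) (hx : x ≠ 0) :
    HasDerivAt (fun u : ℝ => u ^ c) (c * x ^ (c - 1)) x :=
  Real.hasDerivAt_rpow_const (Or.inl hx)

lemma hd_P (h1 : α < 1) (hx : 0 < x) : HasDerivAt (Pf α) (pf α x) x := by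
  have h2 : (2 : ℝ) - α ≠ 0 := by linarith
  have h := (hd_pow (2 - α) hx.ne').div_const (2 - α)
  refine h.congr_deriv (Eq.symm ?_)
  rw [show (2:ℝ) - α - 1 = 1 - α by ring]
  unfold pf
  field_simp

lemma hd_p (hx : 0 < x) : HasDerivAt (pf α) (dpf α x) x := by
  have h := hd_pow (1 - α) hx.ne'
  rw [show (1:ℝ) - α - 1 = -α by ring] at h
  exact h

lemma hd_G (h1 : α < 1) (hx : 0 < x) : HasDerivAt (Gf α) (phif α x) x := by
  have h := (hd_P h1 hx).sub ((hd_p (α := α) hx).div_const 2)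
  refine h.congr_deriv (Eq.symm ?_)
  unfold phif pf dpf
  ring

lemma hd_phi (hx : 0 < x) : HasDerivAt (phif α) (psif α x) x := by
  have h := (hd_p (α := α) hx).sub (((hd_pow (-α) hx.ne')).const_mul ((1 - α) / 2))
  refine h.congr_deriv (Eq.symm ?_)
  unfold psif dpf
  ring

lemma psif_anti (h0 : 0 < α) (h1 : α < 1) (hx : 0 < x) (hxy : x < y) :
    psif α y < psif α x := by
  have ha : -α < 0 := by linarith
  have hb : -α - 1 < 0 := by linarith
  have e1 := Real.rpow_lt_rpow_of_neg hx hxy ha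
  have e2 := Real.rpow_lt_rpow_of_neg hx hxy hb
  have c1 : (0:ℝ) < 1 - α := by linarith
  have c2 : (0:ℝ) < α * (1 - α) / 2 := by positivity
  unfold psif
  have := mul_lt_mul_of_pos_left e1 c1
  have := mul_lt_mul_of_pos_left e2 c2
  linarith

lemma dpf_anti (h0 : 0 < α) (h1 : α < 1) (hx : 0 < x) (hxy : x < y) :
    dpf α y < dpf α x := by
  have e1 := Real.rpow_lt_rpow_of_neg hx hxy (by linarith : -α < 0)
  have c1 : (0:ℝ) < 1 - α := by linarith
  unfold dpf
  exact mul_lt_mul_of_pos_left e1 c1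

lemma mvt {F f : ℝ → ℝ} (hF : ∀ x : ℝ, 0 < x → HasDerivAt F (f x) x)
    {a b : ℝ} (ha : 0 < a) (hab : a < b) :
    ∃ c ∈ Ioo a b, F b - F a = (b - a) * f c := by
  have hcont : ContinuousOn F (Icc a b) := fun z hz =>
    (hF z (lt_of_lt_of_le ha hz.1)).continuousAt.continuousWithinAt
  obtain ⟨c, hc, h⟩ := exists_hasDerivAt_eq_slope F f hab hcont
    (fun z hz => hF z (ha.trans hz.1))
  refine ⟨c, hc, ?_⟩
  rw [h, mul_comm, div_mul_cancel₀ _ (by linarith : b - a ≠ 0)]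

/-- Trapezoid rule underestimates for functions with strictly decreasing derivative. -/
lemma trap {F f f' : ℝ → ℝ} (hF : ∀ x : ℝ, 0 < x → HasDerivAt F (f x) x)
    (hf : ∀ x : ℝ, 0 < x → HasDerivAt f (f' x) x)
    (hanti : ∀ x y : ℝ, 0 < x → x < y → f' y < f' x)
    {a : ℝ} (ha : 0 < a) :
    (f a + f (a + 1)) / 2 < F (a + 1) - F a := by
  set H : ℝ → ℝ := fun t => F (a + t) - F a - t * (f a + f (a + t)) / 2 with hH
  have hder : ∀ t : ℝ, 0 ≤ t →
      HasDerivAt H (f (a + t) - (1 * (f a + f (a + t)) + t * f' (a + t)) / 2) t := by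
    intro t ht
    have hat : 0 < a + t := by linarith
    have d1 : HasDerivAt (fun t : ℝ => F (a + t)) (f (a + t)) t :=
      HasDerivAt.comp_const_add a t (hF _ hat)
    have d2 : HasDerivAt (fun t : ℝ => f (a + t)) (f' (a + t)) t :=
      HasDerivAt.comp_const_add a t (hf _ hat)
    have d3 : HasDerivAt (fun t : ℝ => t * (f a + f (a + t)))
        (1 * (f a + f (a + t)) + t * f' (a + t)) t := by
      have h3 := (hasDerivAt_id t).mul ((hasDerivAt_const t (f a)).add d2)
      refine h3.congr_deriv (Eq.symm ?_)
      simp only [id_eq, one_mul, zero_add, Pi.add_apply]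
    exact (d1.sub_const (F a)).sub (d3.div_const 2)
  have hmono : StrictMonoOn H (Icc 0 1) := by
    apply strictMonoOn_of_deriv_pos (convex_Icc (0:ℝ) 1)
    · exact fun t ht => (hder t ht.1).continuousAt.continuousWithinAt
    · intro t ht
      rw [interior_Icc] at ht
      rw [(hder t ht.1.le).deriv]
      have hat : 0 < a + t := by linarith [ht.1]
      obtain ⟨c, hc, hcc⟩ := mvt hf ha (by linarith [ht.1] : a < a + t)
      have h1 : f' (a + t) < f' c := hanti c (a + t) (ha.trans hc.1) hc.2
      have h2 : f (a + t) - f a = (a + t - a) * f' c := hcc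
      have h3 : t * f' (a + t) < t * f' c :=
        mul_lt_mul_of_pos_left h1 ht.1
      have : t * f' c = f (a + t) - f a := by rw [h2]; ring_nf
      linarith
  have h01 := hmono (left_mem_Icc.2 (by norm_num)) (right_mem_Icc.2 (by norm_num))
    (by norm_num : (0:ℝ) < 1)
  simp only [hH] at h01
  norm_num at h01
  linarith



noncomputable def Sf (α x : ℝ) : ℝ := Gf α (x + 1) - 2 * Gf α x + Gf α (x - 1)
noncomputable def Ef (α y : ℝ) : ℝ := Gf α (y + 1) - Gf α y
noncomputable def Rf (α y : ℝ) : ℝ := phif α (y + 1) - phif α y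

lemma hd_S (h1 : α < 1) (hx : 1 < x) :
    HasDerivAt (Sf α) (phif α (x + 1) - 2 * phif α x + phif α (x - 1)) x := by
  have d1 : HasDerivAt (fun x : ℝ => Gf α (x + 1)) (phif α (x + 1)) x :=
    HasDerivAt.comp_add_const x 1 (hd_G h1 (by linarith))
  have d2 := (hd_G h1 (by linarith : (0:ℝ) < x)).const_mul 2
  have d3 : HasDerivAt (fun x : ℝ => Gf α (x - 1)) (phif α (x - 1)) x :=
    HasDerivAt.comp_sub_const x 1 (hd_G h1 (by linarith))
  exact (d1.sub d2).add d3

lemma S_anti (h0 : 0 < α) (h1 : α < 1) : StrictAntiOn (Sf α) (Ici (3/2 : ℝ)) := by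
  apply strictAntiOn_of_deriv_neg (convex_Ici _)
  · intro z hz
    exact (hd_S h1 (by simpa using hz.trans_lt' (by norm_num))).continuousAt.continuousWithinAt
  · intro z hz
    rw [interior_Ici] at hz
    have hz1 : (1:ℝ) < z := lt_trans (by norm_num) hz
    rw [(hd_S h1 hz1).deriv]
    obtain ⟨c1, hc1, e1⟩ := mvt (fun u hu => hd_phi (α := α) hu)
      (show (0:ℝ) < z - 1 by linarith) (show z - 1 < z by linarith)
    obtain ⟨c2, hc2, e2⟩ := mvt (fun u hu => hd_phi (α := α) hu)
      (show (0:ℝ) < z by linarith) (show z < z + 1 by linarith)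
    have h12 : psif α c2 < psif α c1 :=
      psif_anti h0 h1 (by linarith [hc1.1]) (lt_trans hc1.2 hc2.1)
    rw [show z - (z - 1) = 1 by ring, one_mul] at e1
    rw [show z + 1 - z = 1 by ring, one_mul] at e2
    linarith

lemma lower (h0 : 0 < α) (h1 : α < 1) (hx1 : 0 < x - 1) :
    (1 - α) / (2 * x ^ α) <
      (3 * x ^ (1 - α) - (x - 1) ^ (1 - α)) / 2
        - (x ^ (2 - α) - (x - 1) ^ (2 - α)) / (2 - α) := by
  have hx : 0 < x := by linarith
  obtain ⟨c1, hc1, e1⟩ := mvt (fun u hu => hd_P (α := α) h1 hu) hx1 (by linarith : x - 1 < x)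
  obtain ⟨c2, hc2, e2⟩ := mvt (fun u hu => hd_p (α := α) hu) hx1 (by linarith : x - 1 < x)
  rw [show x - (x - 1) = 1 by ring, one_mul] at e1 e2
  have b1 : pf α c1 < pf α x := by
    unfold pf
    exact Real.rpow_lt_rpow (le_of_lt (by linarith [hc1.1])) hc1.2 (by linarith)
  have b2 : dpf α x < dpf α c2 := dpf_anti h0 h1 (by linarith [hc2.1]) hc2.2
  have e1' : (x ^ (2 - α) - (x - 1) ^ (2 - α)) / (2 - α) = pf α c1 := by
    unfold Pf at e1
    rw [sub_div]
    exact e1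
  rw [e1']
  have hL : (1 - α) / (2 * x ^ α) = dpf α x / 2 := by
    unfold dpf
    rw [Real.rpow_neg hx.le]
    ring
  rw [hL]
  unfold pf dpf at *
  linarith

lemma c0_gt (h0 : 0 < α) (h1 : α < 1) {σ : ℝ} (hσ : σ = 1 - α / 2) :
    Sf α (σ + 1) < Gf α (σ + 1) - Gf α σ := by
  have hσp : (0:ℝ) < σ := by rw [hσ]; linarith
  have hd_E : ∀ y : ℝ, 0 < y → HasDerivAt (Ef α) (Rf α y) y := fun y hy =>
    (HasDerivAt.comp_add_const y 1 (hd_G h1 (by linarith))).sub (hd_G h1 hy)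
  have hd_R : ∀ y : ℝ, 0 < y → HasDerivAt (Rf α) (psif α (y + 1) - psif α y) y := fun y hy =>
    (HasDerivAt.comp_add_const y 1 (hd_phi (by linarith))).sub (hd_phi hy)
  obtain ⟨η, hη, hE⟩ := mvt hd_E hσp (lt_add_one σ)
  rw [show σ + 1 - σ = 1 by ring, one_mul] at hE
  obtain ⟨ζ, hζ, hR⟩ := mvt hd_R hσp hη.1
  have hψ : psif α (ζ + 1) - psif α ζ < 0 := by
    have := psif_anti h0 h1 (hσp.trans hζ.1) (lt_add_one ζ)
    linarith
  have hReta : Rf α η < Rf α σ := by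
    have := mul_neg_of_pos_of_neg (sub_pos.2 hη.1) hψ
    linarith
  have htrap : (phif α σ + phif α (σ + 1)) / 2 < Gf α (σ + 1) - Gf α σ :=
    trap (fun u hu => hd_G h1 hu) (fun u hu => hd_phi hu)
      (fun u v hu huv => psif_anti h0 h1 hu huv) hσp
  have hpow : σ ^ (1 - α) = σ * σ ^ (-α) := by
    rw [show (1:ℝ) - α = 1 + -α by ring, Real.rpow_add hσp, Real.rpow_one]
  have hpow1 : (σ + 1) ^ (1 - α) = (σ + 1) * (σ + 1) ^ (-α) := by
    rw [show (1:ℝ) - α = 1 + -α by ring, Real.rpow_add (by linarith), Real.rpow_one]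
  have phis : phif α σ = σ ^ (-α) / 2 := by
    unfold phif
    rw [hpow]
    have hc : σ - (1 - α) / 2 = 1 / 2 := by rw [hσ]; ring
    linear_combination σ ^ (-α) * hc
  have phis1 : phif α (σ + 1) = 3 / 2 * (σ + 1) ^ (-α) := by
    unfold phif
    rw [hpow1]
    have hc : σ + 1 - (1 - α) / 2 = 3 / 2 := by rw [hσ]; ring
    linear_combination (σ + 1) ^ (-α) * hc
  have key2 : (σ + 1) ^ (-α) < σ ^ (-α) :=
    Real.rpow_lt_rpow_of_neg hσp (lt_add_one σ) (by linarith)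
  have hS : Sf α (σ + 1) = Ef α (σ + 1) - Ef α σ := by
    unfold Sf Ef
    rw [show σ + 1 - 1 = σ by ring]
    ring
  have hRσ : Rf α σ = phif α (σ + 1) - phif α σ := rfl
  have hEσ : Ef α σ = Gf α (σ + 1) - Gf α σ := rfl
  rw [hS]
  linarith

lemma cweight_mid {σ : ℝ} {m i : ℕ} (h0i : i ≠ 0) (him : i ≠ m) :
    cweight α σ m i = Sf α ((i : ℝ) + σ) := by
  unfold cweight Sf Gf
  rw [if_neg h0i, if_neg him]
  ring

lemma cweight_last {σ : ℝ} {m : ℕ} (hm : m ≠ 0) :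
    cweight α σ m m = Sf α ((m : ℝ) + σ)
      - (Pf α ((m : ℝ) + σ + 1) - Pf α ((m : ℝ) + σ)
          - (pf α ((m : ℝ) + σ) + pf α ((m : ℝ) + σ + 1)) / 2) := by
  unfold cweight Sf Gf Pf pf
  rw [if_neg hm, if_pos rfl]
  ring

lemma cweight_zero {σ : ℝ} {m : ℕ} :
    cweight α σ m 0 = Gf α (σ + 1) - Gf α σ := by
  unfold cweight Gf
  rw [if_pos rfl, show (1:ℝ) + σ = σ + 1 by ring]
  ring

end CW

/-- strict monotonicity and positive lower bound of the weights:
0 < (1−α)/(2(m+σ)^α) < c_m^{(m)} < ⋯ < c_1^{(m)} < c_0^{(m)} with σ = 1 − α/2. -/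
theorem stmt_3 (α σ : ℝ) (hα : α ∈ Set.Ioo (0 : ℝ) 1) (hσ : σ = 1 - α / 2)
    (m : ℕ) (hm : 1 ≤ m) :
    0 < (1 - α) / (2 * ((m : ℝ) + σ) ^ α) ∧
    (1 - α) / (2 * ((m : ℝ) + σ) ^ α) < cweight α σ m m ∧
    ∀ i : ℕ, i < m → cweight α σ m (i + 1) < cweight α σ m i := by
  open CW in
  obtain ⟨h0, h1⟩ := hα
  have hσh : 1/2 < σ := by rw [hσ]; linarith
  have hσ1 : σ < 1 := by rw [hσ]; linarith
  have hmR : (1:ℝ) ≤ (m:ℝ) := by exact_mod_cast hm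
  have hxp : (0:ℝ) < (m:ℝ) + σ := by linarith
  have hm0 : m ≠ 0 := by omega
  refine ⟨?_, ?_, ?_⟩
  · have := Real.rpow_pos_of_pos hxp α
    apply div_pos (by linarith) (by linarith)
  · have heq : cweight α σ m m =
        (3 * ((m : ℝ) + σ) ^ (1 - α) - ((m : ℝ) + σ - 1) ^ (1 - α)) / 2
          - (((m : ℝ) + σ) ^ (2 - α) - ((m : ℝ) + σ - 1) ^ (2 - α)) / (2 - α) := by
      unfold cweight
      rw [if_neg hm0, if_pos rfl]
    rw [heq]
    exact CW.lower h0 h1 (by linarith)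
  · intro i hi
    have hiR : (i:ℝ) < (m:ℝ) := by exact_mod_cast hi
    have hub : cweight α σ m (i + 1) ≤ Sf α ((i:ℝ) + 1 + σ) := by
      by_cases h : i + 1 = m
      · have harg : (i:ℝ) + 1 = (m:ℝ) := by exact_mod_cast h
        rw [h, show (i:ℝ) + 1 + σ = (m:ℝ) + σ by rw [harg]]
        have hB := CW.trap (fun u hu => CW.hd_P (α := α) h1 hu)
          (fun u hu => CW.hd_p (α := α) hu)
          (fun u v hu huv => CW.dpf_anti h0 h1 hu huv) hxp
        have hlast := CW.cweight_last (α := α) (σ := σ) hm0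
        linarith
      · have hmid := CW.cweight_mid (α := α) (σ := σ) (m := m)
          (show i + 1 ≠ 0 by omega) h
        push_cast at hmid
        exact le_of_eq hmid
    by_cases h0i : i = 0
    · subst h0i
      rw [CW.cweight_zero]
      have harg : ((0:ℕ):ℝ) + 1 + σ = σ + 1 := by push_cast; ring
      rw [harg] at hub
      exact lt_of_le_of_lt hub (CW.c0_gt h0 h1 hσ)
    · have h1i : (1:ℝ) ≤ (i:ℝ) := by
        have : 1 ≤ i := Nat.one_le_iff_ne_zero.2 h0i
        exact_mod_cast this
      rw [CW.cweight_mid h0i (Nat.ne_of_lt hi)]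
      refine lt_of_le_of_lt hub ?_
      exact CW.S_anti h0 h1 (by simp only [Set.mem_Ici]; linarith)
        (by simp only [Set.mem_Ici]; linarith) (by linarith)
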